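/- Consequently, the soft top-k map restricted to the hyperplane {r ∈ ℝⁿ : Σᵢ rᵢ = 0} is injective. -/
import Mathlib


/-- The soft top-k map restricted to the hyperplane
`{r : ∑ i, r i = 0}` is injective: if two zero-sum inputs produce the same soft
top-k output, they are equal. -/
theorem soft_topk_injective_on_zero_sum {n : ℕ} (hn : 0 < n) (F : ℝ → ℝ)
    (hF_mono : StrictMono F) (hF_cont : Continuous F)
    (α : ℝ) (hα : 0 < α) (k : ℝ) (hk0 : 0 < k) (hkn : k < n)
    (r r' : Fin n → ℝ) (hr : ∑ i, r i = 0) (hr' : ∑ i, r' i = 0)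
    (b b' : ℝ)
    (hb : ∑ i, F ((b - r i) / α) = k)
    (hb' : ∑ i, F ((b' - r' i) / α) = k)
    (heq : ∀ i, F ((b - r i) / α) = F ((b' - r' i) / α)) :
    r = r' := by
  have harg : ∀ i, b - r i = b' - r' i := by
    intro i
    have := hF_mono.injective (heq i)
    field_simp at this
    linarith
  have hsum : ∑ i, (b - r i) = ∑ i, (b' - r' i) :=
    Finset.sum_congr rfl fun i _ => harg i
  rw [Finset.sum_sub_distrib, Finset.sum_sub_distrib, hr, hr'] at hsum
  simp at hsum
  have hbb : b = b' := by
    have hn' : (n : ℝ) ≠ 0 := Nat.cast_ne_zero.mpr hn.ne'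
    rcases hsum with h | h
    · exact h
    · exact absurd h hn.ne'
  funext i
  have := harg i
  linarith [hbb]
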